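/- Let n be a positive natural number and let x_1, ..., x_n be nonnegative real numbers with arithmetic mean A = (x_1 + ... + x_n)/n and geometric mean G = (x_1 x_2 ... x_n)^(1/n). Then A - G = (1/n) ∑_{i=1}^n (√(x_i) - √G)^2 if and only if at least one of the x_i equals zero or all the x_i are equal. -/

import Mathlib

open Finset Real

/-- Equality case of (2.6): `A - G = (1/n) ∑ i (√(x i) - √G)^2` if and only if one of the `x i`
is zero or all the `x i` are equal. -/
theorem strong_cauchy_equality_iff (n : ℕ) (hn : 0 < n) (x : Fin n → ℝ) (hx : ∀ i, 0 ≤ x i)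
    (A G : ℝ) (hA : A = (∑ i, x i) / n) (hG : G = (∏ i, x i) ^ ((1 : ℝ) / n)) :
    A - G = (1 / n : ℝ) * ∑ i, (Real.sqrt (x i) - Real.sqrt G) ^ 2 ↔
      (∃ i, x i = 0) ∨ (∀ i j, x i = x j) := by
  have hn' : (n : ℝ) ≠ 0 := Nat.cast_ne_zero.mpr hn.ne'
  have hnpos : (0 : ℝ) < n := by positivity
  have hP0 : 0 ≤ ∏ i, x i := Finset.prod_nonneg fun i _ => hx i
  have hG0 : 0 ≤ G := by rw [hG]; positivity
  have expand : ∑ i, (Real.sqrt (x i) - Real.sqrt G) ^ 2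
      = ∑ i, x i - 2 * Real.sqrt G * ∑ i, Real.sqrt (x i) + n * G := by
    have : ∀ i, (Real.sqrt (x i) - Real.sqrt G) ^ 2
        = x i - 2 * Real.sqrt G * Real.sqrt (x i) + G := by
      intro i
      have h1 : Real.sqrt (x i) ^ 2 = x i := Real.sq_sqrt (hx i)
      have h2 : Real.sqrt G ^ 2 = G := Real.sq_sqrt hG0
      ring_nf
      nlinarith [h1, h2]
    rw [Finset.sum_congr rfl fun i _ => this i]
    rw [Finset.sum_add_distrib, Finset.sum_sub_distrib, ← Finset.mul_sum,
      Finset.sum_const, Finset.card_univ, Fintype.card_fin, nsmul_eq_mul]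
  have key : (A - G = (1 / n : ℝ) * ∑ i, (Real.sqrt (x i) - Real.sqrt G) ^ 2)
      ↔ Real.sqrt G * ∑ i, Real.sqrt (x i) = n * G := by
    rw [expand, hA]
    constructor
    · intro h; field_simp at h; linarith
    · intro h; field_simp; linarith
  rw [key]
  constructor
  · intro h
    by_cases hP : ∏ i, x i = 0
    · left
      exact (Finset.prod_eq_zero_iff.mp hP).imp fun i hi => hi.2
    · right
      have hPpos : 0 < ∏ i, x i := lt_of_le_of_ne hP0 (Ne.symm hP)
      have hGpos : 0 < G := by rw [hG]; positivity
      have hxpos : ∀ i, 0 < x i := by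
        intro i
        rcases (hx i).lt_or_eq with h' | h'
        · exact h'
        · exfalso; exact hP (Finset.prod_eq_zero (Finset.mem_univ i) h'.symm)
      -- S / n = √G
      have hS : ∑ i, Real.sqrt (x i) = n * Real.sqrt G := by
        have hsg : 0 < Real.sqrt G := Real.sqrt_pos.mpr hGpos
        have : Real.sqrt G * ∑ i, Real.sqrt (x i) = Real.sqrt G * (n * Real.sqrt G) := by
          rw [h, show Real.sqrt G * ((n:ℝ) * Real.sqrt G) = (n:ℝ) * (Real.sqrt G * Real.sqrt G) by ring,
            Real.mul_self_sqrt hG0]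
        exact mul_left_cancel₀ hsg.ne' this
      -- Jensen equality with exp
      have hw : ∀ i ∈ Finset.univ (α := Fin n), (0:ℝ) < 1 / n := fun _ _ => by positivity
      have hw1 : ∑ _i : Fin n, (1 / n : ℝ) = 1 := by
        simp [Finset.sum_const, Finset.card_univ]
        field_simp
      have hsqrt_exp : ∀ i, Real.sqrt (x i) = Real.exp (Real.log (x i) / 2) := by
        intro i
        rw [Real.sqrt_eq_rpow, Real.rpow_def_of_pos (hxpos i)]
        ring_nf
      have hsum_log : ∑ i, Real.log (x i) = Real.log (∏ i, x i) := by
        rw [Real.log_prod fun i _ => (hxpos i).ne']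
      have hGexp : Real.sqrt G = Real.exp (∑ i : Fin n, (1 / n : ℝ) • (Real.log (x i) / 2)) := by
        rw [hG, Real.sqrt_eq_rpow, ← Real.rpow_mul hP0, Real.rpow_def_of_pos hPpos]
        congr 1
        simp only [smul_eq_mul]
        rw [← Finset.mul_sum, ← Finset.sum_div, hsum_log]
        ring
      have h_eq : ∑ i : Fin n, (1 / n : ℝ) • Real.exp (Real.log (x i) / 2)
          ≤ Real.exp (∑ i : Fin n, (1 / n : ℝ) • (Real.log (x i) / 2)) := by
        rw [← hGexp]
        simp only [smul_eq_mul]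
        rw [← Finset.mul_sum]
        apply le_of_eq
        calc (1/n : ℝ) * ∑ i, Real.exp (Real.log (x i) / 2)
            = (1/n : ℝ) * ∑ i, Real.sqrt (x i) := by
              congr 1; exact Finset.sum_congr rfl fun i _ => (hsqrt_exp i).symm
          _ = Real.sqrt G := by rw [hS]; field_simp
      intros i j
      have := (strictConvexOn_exp).eq_of_le_map_sum hw hw1
          (fun i _ => Set.mem_univ _) h_eq (Finset.mem_univ i) (Finset.mem_univ j)
      have hlog : Real.log (x i) = Real.log (x j) := by linarith
      exact Real.log_injOn_pos (Set.mem_Ioi.mpr (hxpos i)) (Set.mem_Ioi.mpr (hxpos j)) hlog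
  · rintro (⟨i, hi⟩ | hall)
    · have hP : ∏ j, x j = 0 := Finset.prod_eq_zero (Finset.mem_univ i) hi
      have : G = 0 := by rw [hG, hP, Real.zero_rpow (by positivity)]
      simp [this]
    · obtain ⟨i0⟩ := Fin.pos_iff_nonempty.mp hn
      set c := x i0 with hc
      have hxc : ∀ i, x i = c := fun i => hall i i0
      have hc0 : 0 ≤ c := hx i0
      have hPc : ∏ i, x i = c ^ n := by
        rw [Finset.prod_congr rfl fun i _ => hxc i, Finset.prod_const, Finset.card_univ,
          Fintype.card_fin]
      have hGc : G = c := by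
        rw [hG, hPc, ← Real.rpow_natCast c n, ← Real.rpow_mul hc0]
        rw [mul_one_div_cancel hn', Real.rpow_one]
      have hSc : ∑ i, Real.sqrt (x i) = n * Real.sqrt c := by
        rw [Finset.sum_congr rfl fun i _ => by rw [hxc i], Finset.sum_const, Finset.card_univ,
          Fintype.card_fin, nsmul_eq_mul]
      rw [hGc, hSc, ← mul_assoc, mul_comm (Real.sqrt c) (n:ℝ), mul_assoc,
        Real.mul_self_sqrt hc0]
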